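/- Suppose the marginal value function is constant: v(x) = v > 0 for all x ∈ [0,Q]. Then the M-point bid (q,b) given by q_k = kQ/M and b_k = (v/(M+1))·Σ_{k'=k}^M (M/(M+1))^{k'−k} for k ∈ {1,…,M} is a minimax-loss bid in the constrained pay-as-bid auction, i.e., it minimizes L^PAB over all M-point bids; in particular the optimal quantity points are evenly spaced. -/

import Mathlib

open MeasureTheory intervalIntegral

noncomputable section

/-- Positive part `(x)₊ = max(x,0)`. -/
def pos (x : ℝ) : ℝ := max x 0

/-- An `M`-point bid `(q,b)`: `0 = q_0 ≤ q_1 ≤ … ≤ q_M ≤ Q` and `b_1 ≥ … ≥ b_M ≥ 0`. -/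
def IsBidPts (Q : ℝ) (M : ℕ) (q b : ℕ → ℝ) : Prop :=
  q 0 = 0 ∧ (∀ k, k < M → q k ≤ q (k + 1)) ∧ q M ≤ Q ∧
    (∀ k, 1 ≤ k → k < M → b (k + 1) ≤ b k) ∧ 0 ≤ b M

/-- The step bid function induced by the `M`-point bid `(q,b)`:
`b̂(x) = b_k` for `q_{k−1} ≤ x < q_k` and `b̂(x) = 0` for `x ≥ q_M`. -/
def bhat (M : ℕ) (q b : ℕ → ℝ) (x : ℝ) : ℝ :=
  ∑ k ∈ Finset.Icc 1 M, if q (k - 1) ≤ x ∧ x < q k then b k else 0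

/-- Conditional regret at quantity `t` in the bidpoint-constrained pay-as-bid auction:
`R^PAB_t(q,b) = ∫_0^t (b̂(x) − b̂(t)) dx + ∫_t^Q (v(x) − b̂(t))₊ dx`. -/
def Rcpab (Q : ℝ) (M : ℕ) (v : ℝ → ℝ) (q b : ℕ → ℝ) (t : ℝ) : ℝ :=
  (∫ x in (0:ℝ)..t, (bhat M q b x - bhat M q b t))
    + ∫ x in t..Q, pos (v x - bhat M q b t)

/-- Loss in the bidpoint-constrained pay-as-bid auction:
`L^PAB(q,b) = sup_{t ∈ [0,Q]} R^PAB_t(q,b)`. -/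
def Lcpab (Q : ℝ) (M : ℕ) (v : ℝ → ℝ) (q b : ℕ → ℝ) : ℝ :=
  sSup {r : ℝ | ∃ t ∈ Set.Icc (0:ℝ) Q, r = Rcpab Q M v q b t}

/-- A minimax-loss `M`-point bid in the constrained pay-as-bid auction. -/
def IsMinimaxCPAB (Q : ℝ) (M : ℕ) (v : ℝ → ℝ) (q b : ℕ → ℝ) : Prop :=
  IsBidPts Q M q b ∧ ∀ q' b', IsBidPts Q M q' b' → Lcpab Q M v q b ≤ Lcpab Q M v q' b'

/-- Loss in the bidpoint-constrained uniform-price auction: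
`L^LAB(q,b) = max( max_{1≤k≤M} max( q_k·b_k , ∫_{q_{k−1}}^Q (v(x) − b_k)₊ dx ) , ∫_{q_M}^Q v )`. -/
def Lclab (Q : ℝ) (M : ℕ) (hM : 1 ≤ M) (v : ℝ → ℝ) (q b : ℕ → ℝ) : ℝ :=
  max ((Finset.Icc 1 M).sup' (Finset.nonempty_Icc.mpr hM)
        (fun k => max (q k * b k) (∫ x in q (k - 1)..Q, pos (v x - b k))))
      (∫ x in q M..Q, v x)

/-- A minimax-loss `M`-point bid in the constrained uniform-price auction. -/
def IsMinimaxCLAB (Q : ℝ) (M : ℕ) (hM : 1 ≤ M) (v : ℝ → ℝ) (q b : ℕ → ℝ) : Prop :=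
  IsBidPts Q M q b ∧
    ∀ q' b', IsBidPts Q M q' b' → Lclab Q M hM v q b ≤ Lclab Q M hM v q' b'

/-- The marginal value function: weakly decreasing, nonnegative and integrable on `[0,Q]`. -/
def IsValueFn (Q : ℝ) (v : ℝ → ℝ) : Prop :=
  AntitoneOn v (Set.Icc 0 Q) ∧ (∀ x ∈ Set.Icc (0:ℝ) Q, 0 ≤ v x) ∧
    IntervalIntegrable v volume 0 Q

/-! ### Auxiliary lemmas -/

lemma qmono {Q : ℝ} {M : ℕ} {q b : ℕ → ℝ} (h : IsBidPts Q M q b) :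
    ∀ i j, i ≤ j → j ≤ M → q i ≤ q j := by
  intro i j hij hjM
  induction j with
  | zero => simp_all
  | succ n ih =>
    rcases Nat.lt_or_ge i (n+1) with hl | hg
    · exact le_trans (ih (Nat.lt_succ_iff.mp hl) (Nat.le_of_succ_le hjM))
        (h.2.1 n (Nat.lt_of_succ_le hjM))
    · have : i = n + 1 := le_antisymm hij hg
      simp [this]

lemma bmono {Q : ℝ} {M : ℕ} {q b : ℕ → ℝ} (h : IsBidPts Q M q b) :
    ∀ i j, 1 ≤ i → i ≤ j → j ≤ M → b j ≤ b i := by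
  intro i j hi hij hjM
  induction j with
  | zero => omega
  | succ n ih =>
    rcases Nat.lt_or_ge i (n+1) with hl | hg
    · have hn1 : 1 ≤ n := by omega
      exact le_trans (h.2.2.2.1 n hn1 (by omega)) (ih (by omega) (by omega))
    · have : i = n + 1 := le_antisymm hij hg
      simp [this]

lemma bnonneg {Q : ℝ} {M : ℕ} {q b : ℕ → ℝ} (h : IsBidPts Q M q b) :
    ∀ k, 1 ≤ k → k ≤ M → 0 ≤ b k :=
  fun k h1 h2 => le_trans h.2.2.2.2 (bmono h k M h1 h2 le_rfl)

lemma bhat_eq {Q : ℝ} {M : ℕ} {q b : ℕ → ℝ} (h : IsBidPts Q M q b) {j : ℕ} {t : ℝ}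
    (h1 : 1 ≤ j) (h2 : j ≤ M) (h3 : q (j-1) ≤ t) (h4 : t < q j) :
    bhat M q b t = b j := by
  unfold bhat
  rw [Finset.sum_eq_single_of_mem j (Finset.mem_Icc.mpr ⟨h1, h2⟩)]
  · simp [h3, h4]
  · intro i hi hne
    rw [Finset.mem_Icc] at hi
    rw [if_neg]
    rintro ⟨hc1, hc2⟩
    rcases Nat.lt_or_ge i j with hl | hg
    · exact absurd (lt_of_lt_of_le hc2 (qmono h i (j-1) (by omega) (by omega))) (not_lt.mpr h3)
    · have : q j ≤ q (i - 1) := qmono h j (i-1) (by omega) (by omega)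
      exact absurd (lt_of_lt_of_le h4 (le_trans this hc1)) (lt_irrefl t)

lemma bhat_eq_zero {Q : ℝ} {M : ℕ} {q b : ℕ → ℝ} (h : IsBidPts Q M q b) {t : ℝ}
    (ht : q M ≤ t) : bhat M q b t = 0 := by
  unfold bhat
  apply Finset.sum_eq_zero
  intro i hi
  rw [Finset.mem_Icc] at hi
  rw [if_neg]
  rintro ⟨-, hc2⟩
  exact absurd (lt_of_lt_of_le hc2 (le_trans (qmono h i M hi.2 le_rfl) ht)) (lt_irrefl t)

lemma bhat_cases {Q : ℝ} {M : ℕ} {q b : ℕ → ℝ} (h : IsBidPts Q M q b) (t : ℝ) :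
    bhat M q b t = 0 ∨
      ∃ j, 1 ≤ j ∧ j ≤ M ∧ q (j-1) ≤ t ∧ t < q j ∧ bhat M q b t = b j := by
  by_cases hc : ∃ j, 1 ≤ j ∧ j ≤ M ∧ q (j-1) ≤ t ∧ t < q j
  · obtain ⟨j, h1, h2, h3, h4⟩ := hc
    exact Or.inr ⟨j, h1, h2, h3, h4, bhat_eq h h1 h2 h3 h4⟩
  · left
    push_neg at hc
    apply Finset.sum_eq_zero
    intro i hi
    rw [Finset.mem_Icc] at hi
    rw [if_neg]
    rintro ⟨hc1, hc2⟩
    exact absurd hc2 (not_lt.mpr (hc i hi.1 hi.2 hc1))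

lemma bhat_nonneg {Q : ℝ} {M : ℕ} {q b : ℕ → ℝ} (h : IsBidPts Q M q b) (t : ℝ) :
    0 ≤ bhat M q b t := by
  rcases bhat_cases h t with h0 | ⟨j, h1, h2, -, -, h5⟩
  · rw [h0]
  · rw [h5]; exact bnonneg h j h1 h2

lemma bhat_le {Q : ℝ} {M : ℕ} {q b : ℕ → ℝ} (h : IsBidPts Q M q b) (t : ℝ) :
    bhat M q b t ≤ max (b 1) 0 := by
  rcases bhat_cases h t with h0 | ⟨j, h1, h2, -, -, h5⟩
  · rw [h0]; exact le_max_right _ _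
  · rw [h5]; exact le_trans (bmono h 1 j le_rfl h1 h2) (le_max_left _ _)

lemma bhat_intervalIntegrable (M : ℕ) (q b : ℕ → ℝ) (a c : ℝ) :
    IntervalIntegrable (bhat M q b) volume a c := by
  have h1 : bhat M q b = ∑ k ∈ Finset.Icc 1 M,
      (fun x => if q (k - 1) ≤ x ∧ x < q k then b k else 0) := by
    funext x
    rw [Finset.sum_apply]
    rfl
  rw [h1]
  apply IntervalIntegrable.sum
  intro k _
  have h2 : (fun x => if q (k - 1) ≤ x ∧ x < q k then b k else 0)
      = (Set.Ico (q (k-1)) (q k)).indicator (fun _ => b k) := by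
    funext x
    rw [Set.indicator_apply]
    simp [Set.mem_Ico]
  rw [h2, intervalIntegrable_iff]
  exact ((MeasureTheory.integrableOn_const_iff).mpr (Or.inr measure_Ioc_lt_top)).indicator
    measurableSet_Ico

lemma integral_piece {Q : ℝ} {M : ℕ} {q b : ℕ → ℝ} (h : IsBidPts Q M q b) {k : ℕ} {t : ℝ}
    (hk1 : 1 ≤ k) (hk2 : k ≤ M) (h3 : q (k-1) ≤ t) (h4 : t ≤ q k) :
    ∫ x in (q (k-1))..t, bhat M q b x = (t - q (k-1)) * b k := by
  have hne : ∀ᵐ x : ℝ, x ≠ q k := by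
    rw [MeasureTheory.ae_iff]
    simp only [not_not, Set.setOf_eq_eq_singleton]
    exact measure_singleton _
  have hae : ∀ᵐ x : ℝ, x ∈ Set.uIoc (q (k-1)) t → bhat M q b x = b k := by
    filter_upwards [hne] with x hx hmem
    rw [Set.uIoc_of_le h3] at hmem
    exact bhat_eq h hk1 hk2 (le_of_lt hmem.1) (lt_of_le_of_ne (le_trans hmem.2 h4) hx)
  rw [intervalIntegral.integral_congr_ae hae, intervalIntegral.integral_const, smul_eq_mul]

lemma integral_upto {Q : ℝ} {M : ℕ} {q b : ℕ → ℝ} (h : IsBidPts Q M q b) :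
    ∀ k, k ≤ M → ∫ x in (0:ℝ)..(q k), bhat M q b x
      = ∑ j ∈ Finset.Icc 1 k, (q j - q (j-1)) * b j := by
  intro k
  induction k with
  | zero => intro _; simp [h.1]
  | succ n ih =>
    intro hM1
    rw [← intervalIntegral.integral_add_adjacent_intervals
      (bhat_intervalIntegrable M q b 0 (q n)) (bhat_intervalIntegrable M q b (q n) (q (n+1)))]
    have hpiece : ∫ x in (q n)..(q (n+1)), bhat M q b x = (q (n+1) - q n) * b (n+1) := by
      have := integral_piece h (k := n+1) (t := q (n+1)) (by omega) hM1
        (by simpa using h.2.1 n hM1) (le_refl _)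
      simpa using this
    rw [ih (by omega), hpiece, Finset.sum_Icc_succ_top (by omega : 1 ≤ n + 1)]
    simp

lemma integral_upto_mid {Q : ℝ} {M : ℕ} {q b : ℕ → ℝ} (h : IsBidPts Q M q b) {k : ℕ} {t : ℝ}
    (hk1 : 1 ≤ k) (hk2 : k ≤ M) (h3 : q (k-1) ≤ t) (h4 : t ≤ q k) :
    ∫ x in (0:ℝ)..t, bhat M q b x
      = (∑ j ∈ Finset.Icc 1 (k-1), (q j - q (j-1)) * b j) + (t - q (k-1)) * b k := by
  rw [← intervalIntegral.integral_add_adjacent_intervals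
    (bhat_intervalIntegrable M q b 0 (q (k-1))) (bhat_intervalIntegrable M q b (q (k-1)) t),
    integral_upto h (k-1) (by omega), integral_piece h hk1 hk2 h3 h4]

lemma integral_upto_top {Q : ℝ} {M : ℕ} {q b : ℕ → ℝ} (h : IsBidPts Q M q b) {t : ℝ}
    (ht : q M ≤ t) :
    ∫ x in (0:ℝ)..t, bhat M q b x = ∑ j ∈ Finset.Icc 1 M, (q j - q (j-1)) * b j := by
  rw [← intervalIntegral.integral_add_adjacent_intervals
    (bhat_intervalIntegrable M q b 0 (q M)) (bhat_intervalIntegrable M q b (q M) t),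
    integral_upto h M le_rfl]
  have h0 : ∫ x in (q M)..t, bhat M q b x = ∫ x in (q M)..t, (0:ℝ) := by
    apply intervalIntegral.integral_congr
    intro x hx
    rw [Set.uIcc_of_le ht] at hx
    exact bhat_eq_zero h hx.1
  rw [h0]
  simp

lemma Rcpab_formula {Q : ℝ} {M : ℕ} {q b : ℕ → ℝ} (v₀ t : ℝ) :
    Rcpab Q M (fun _ => v₀) q b t
      = (∫ x in (0:ℝ)..t, bhat M q b x) - t * bhat M q b t
        + (Q - t) * pos (v₀ - bhat M q b t) := by
  unfold Rcpab
  rw [intervalIntegral.integral_sub (bhat_intervalIntegrable M q b 0 t)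
    intervalIntegrable_const, intervalIntegral.integral_const, intervalIntegral.integral_const]
  simp [smul_eq_mul]

lemma amgm {n : ℕ} (z : ℕ → ℝ) (hz : ∀ i ∈ Finset.range n, 0 ≤ z i) :
    ∏ i ∈ Finset.range n, z i ≤ ((∑ i ∈ Finset.range n, z i) / n) ^ n := by
  rcases Nat.eq_zero_or_pos n with rfl | hn
  · simp
  have hw : ∀ i ∈ Finset.range n, (0:ℝ) ≤ 1 / n := fun i _ => by positivity
  have hw' : ∑ _i ∈ Finset.range n, (1:ℝ) / n = 1 := by
    rw [Finset.sum_const, Finset.card_range, nsmul_eq_mul]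
    field_simp
  have key := Real.geom_mean_le_arith_mean_weighted (Finset.range n) (fun _ => 1 / n) z hw hw' hz
  have hprod : ∏ i ∈ Finset.range n, z i = (∏ i ∈ Finset.range n, z i ^ ((1:ℝ) / n)) ^ n := by
    rw [← Finset.prod_pow]
    refine Finset.prod_congr rfl fun i hi => ?_
    rw [← Real.rpow_natCast (z i ^ ((1:ℝ)/n)) n, ← Real.rpow_mul (hz i hi)]
    field_simp
    simp
  rw [hprod]
  have h1 : (0:ℝ) ≤ ∏ i ∈ Finset.range n, z i ^ ((1:ℝ) / n) :=
    Finset.prod_nonneg fun i hi => Real.rpow_nonneg (hz i hi) _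
  calc (∏ i ∈ Finset.range n, z i ^ ((1:ℝ) / n)) ^ n
      ≤ (∑ i ∈ Finset.range n, 1 / (n:ℝ) * z i) ^ n := pow_le_pow_left₀ h1 key n
    _ = ((∑ i ∈ Finset.range n, z i) / n) ^ n := by
        rw [← Finset.mul_sum]; ring_nf

lemma b_closed {v₀ : ℝ} {M : ℕ} (hM : 1 ≤ M) {b : ℕ → ℝ}
    (hb : ∀ k, b k = (v₀ / (M + 1)) * ∑ j ∈ Finset.Icc k M, ((M : ℝ) / (M + 1)) ^ (j - k)) :
    ∀ k, 1 ≤ k → k ≤ M + 1 → b k = v₀ * (1 - ((M : ℝ) / (M + 1)) ^ (M + 1 - k)) := by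
  intro k hk1 hk2
  have hm0 : (0:ℝ) < M := by exact_mod_cast Nat.lt_of_lt_of_le Nat.zero_lt_one hM
  have hm1 : (0:ℝ) < (M:ℝ) + 1 := by linarith
  have hrne : ((M : ℝ) / (M + 1)) ≠ 1 := by
    intro hcontra
    rw [div_eq_iff (ne_of_gt hm1)] at hcontra
    linarith
  have hre : ∑ j ∈ Finset.Icc k M, ((M : ℝ) / (M + 1)) ^ (j - k)
      = ∑ i ∈ Finset.range (M + 1 - k), ((M : ℝ) / (M + 1)) ^ i := by
    rw [← Finset.Ico_add_one_right_eq_Icc, Finset.sum_Ico_eq_sum_range]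
    exact Finset.sum_congr rfl fun i _ => by rw [Nat.add_sub_cancel_left]
  rw [hb, hre, geom_sum_eq hrne]
  have : (M:ℝ) / (M + 1) - 1 = -(1 / ((M:ℝ) + 1)) := by field_simp; ring
  rw [this]
  field_simp
  ring

lemma Ek_ident {Q v₀ : ℝ} {M : ℕ} (hQ : 0 < Q) (hM : 1 ≤ M) {q b : ℕ → ℝ}
    (hq : ∀ k, q k = (k : ℝ) * Q / M)
    (hbc : ∀ k, 1 ≤ k → k ≤ M + 1 → b k = v₀ * (1 - ((M : ℝ) / (M + 1)) ^ (M + 1 - k))) :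
    ∀ k, k ≤ M → (∑ j ∈ Finset.Icc 1 k, (q j - q (j-1)) * b j) + (Q - q k) * v₀ - Q * b (k+1)
      = Q * v₀ * ((M : ℝ) / (M + 1)) ^ M := by
  have hm0 : (0:ℝ) < M := by exact_mod_cast Nat.lt_of_lt_of_le Nat.zero_lt_one hM
  have hm1 : (0:ℝ) < (M:ℝ) + 1 := by linarith
  intro k
  induction k with
  | zero =>
    intro _
    have hq0 : q 0 = 0 := by simp [hq]
    have hb1 : b 1 = v₀ * (1 - ((M : ℝ) / (M + 1)) ^ M) := by
      have := hbc 1 le_rfl (by omega)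
      simpa using this
    simp only [Finset.Icc_self, hq0, hb1]
    norm_num
    ring
  | succ k ih =>
    intro hk1
    have ih' := ih (by omega)
    rw [Finset.sum_Icc_succ_top (by omega : 1 ≤ k + 1)]
    have hidx : k + 1 - 1 = k := by omega
    rw [hidx]
    have eδ : q (k+1) = q k + Q / M := by
      rw [hq, hq]
      push_cast
      field_simp
    have e2 : b (k+1) = v₀ * (1 - ((M : ℝ) / (M + 1)) ^ (M - k)) := by
      have := hbc (k+1) (by omega) (by omega)
      rwa [(by omega : M + 1 - (k + 1) = M - k)] at this
    have e3 : b (k+2) = v₀ * (1 - ((M : ℝ) / (M + 1)) ^ (M - k - 1)) := by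
      have := hbc (k+2) (by omega) (by omega)
      rwa [(by omega : M + 1 - (k + 2) = M - k - 1)] at this
    have epow : ((M : ℝ) / (M + 1)) ^ (M - k)
        = ((M : ℝ) / (M + 1)) ^ (M - k - 1) * ((M : ℝ) / (M + 1)) := by
      conv_lhs => rw [(by omega : M - k = (M - k - 1) + 1)]
      rw [pow_succ]
    have hz : (Q / M) * (b (k+1) - v₀) + Q * (b (k+1) - b (k+2)) = 0 := by
      rw [e2, e3, epow]
      field_simp
      ring
    linear_combination ih' + hz + (b (k+1) - v₀) * eδ

def Ssum (q b : ℕ → ℝ) (k : ℕ) : ℝ := ∑ j ∈ Finset.Icc 1 k, (q j - q (j-1)) * b j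

lemma lower_bound {Q v₀ : ℝ} {M : ℕ} (hQ : 0 < Q) (hM : 1 ≤ M) (hv₀ : 0 < v₀)
    (q' b' : ℕ → ℝ) (hbid' : IsBidPts Q M q' b') :
    Q * v₀ * ((M:ℝ)/(M+1))^M ≤ Lcpab Q M (fun _ => v₀) q' b' := by
  have hm0 : (0:ℝ) < M := by exact_mod_cast Nat.lt_of_lt_of_le Nat.zero_lt_one hM
  have hm1 : (0:ℝ) < (M:ℝ) + 1 := by linarith
  have hr0 : (0:ℝ) ≤ (M:ℝ)/(M+1) := by positivity
  set L := Lcpab Q M (fun _ => v₀) q' b' with hLdef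
  obtain ⟨hq0', hqstep', hqM', hbdec', hbM'⟩ := hbid'
  have hbid' : IsBidPts Q M q' b' := ⟨hq0', hqstep', hqM', hbdec', hbM'⟩
  have hqnn : ∀ k, k ≤ M → 0 ≤ q' k := fun k hk => hq0' ▸ qmono hbid' 0 k (Nat.zero_le _) hk
  have hqleQ : ∀ k, k ≤ M → q' k ≤ Q := fun k hk => le_trans (qmono hbid' k M hk le_rfl) hqM'
  set C := max (b' 1) 0 with hC
  have hC0 : (0:ℝ) ≤ C := le_max_right _ _
  have hub : ∀ r ∈ {r : ℝ | ∃ t ∈ Set.Icc (0:ℝ) Q, r = Rcpab Q M (fun _ => v₀) q' b' t},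
      r ≤ Q * C + Q * v₀ := by
    rintro r ⟨t, ⟨ht0, htQ⟩, rfl⟩
    rw [Rcpab_formula]
    have hint_le : ∫ x in (0:ℝ)..t, bhat M q' b' x ≤ t * C := by
      have h1 := intervalIntegral.integral_mono_on ht0 (bhat_intervalIntegrable M q' b' 0 t)
        intervalIntegrable_const (fun x _ => bhat_le hbid' x)
      rw [intervalIntegral.integral_const, smul_eq_mul] at h1
      linarith
    have h2 : 0 ≤ t * bhat M q' b' t := mul_nonneg ht0 (bhat_nonneg hbid' t)
    have h3 : (Q - t) * pos (v₀ - bhat M q' b' t) ≤ Q * v₀ := by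
      have hp1 : pos (v₀ - bhat M q' b' t) ≤ v₀ :=
        max_le (by linarith [bhat_nonneg hbid' t]) hv₀.le
      have hp0 : (0:ℝ) ≤ pos (v₀ - bhat M q' b' t) := le_max_right _ _
      nlinarith
    have h4 : t * C ≤ Q * C := mul_le_mul_of_nonneg_right htQ hC0
    linarith
  have hbdd : BddAbove {r : ℝ | ∃ t ∈ Set.Icc (0:ℝ) Q, r = Rcpab Q M (fun _ => v₀) q' b' t} :=
    ⟨Q * C + Q * v₀, hub⟩
  have hle : ∀ t ∈ Set.Icc (0:ℝ) Q, Rcpab Q M (fun _ => v₀) q' b' t ≤ L :=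
    fun t ht => le_csSup hbdd ⟨t, ht, rfl⟩
  have hRk : ∀ k, k ≤ M → Ssum q' b' k - q' k * bhat M q' b' (q' k)
      + (Q - q' k) * pos (v₀ - bhat M q' b' (q' k)) ≤ L := by
    intro k hk
    have h1 := hle (q' k) ⟨hqnn k hk, hqleQ k hk⟩
    rwa [Rcpab_formula, integral_upto hbid' k hk] at h1
  have hcon : ∀ k, k < M → Q * (v₀ - b' (k+1)) ≤ L - Ssum q' b' k + q' k * v₀ := by
    intro k hk
    have hcle : bhat M q' b' (q' k) ≤ b' (k+1) := by
      rcases bhat_cases hbid' (q' k) with h0 | ⟨j, hj1, hj2, hj3, hj4, hj5⟩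
      · rw [h0]; exact bnonneg hbid' (k+1) (by omega) (by omega)
      · have hjk : k + 1 ≤ j := by
          by_contra hcon2
          push_neg at hcon2
          have := qmono hbid' j k (by omega) (by omega)
          linarith
        rw [hj5]
        exact bmono hbid' (k+1) j (by omega) hjk hj2
    have hRk' := hRk k (by omega)
    have hp : v₀ - bhat M q' b' (q' k) ≤ pos (v₀ - bhat M q' b' (q' k)) := le_max_left _ _
    have hm1' : (Q - q' k) * (v₀ - bhat M q' b' (q' k))
        ≤ (Q - q' k) * pos (v₀ - bhat M q' b' (q' k)) :=
      mul_le_mul_of_nonneg_left hp (by linarith [hqleQ k (by omega)])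
    have hm2 : Q * bhat M q' b' (q' k) ≤ Q * b' (k+1) := mul_le_mul_of_nonneg_left hcle hQ.le
    nlinarith [hRk', hm1', hm2]
  have hSstep : ∀ k, Ssum q' b' (k+1) = Ssum q' b' k + (q' (k+1) - q' k) * b' (k+1) := by
    intro k
    unfold Ssum
    rw [Finset.sum_Icc_succ_top (by omega : 1 ≤ k+1), (by omega : k + 1 - 1 = k)]
  have hstep : ∀ k, k < M →
      Q * (L - Ssum q' b' (k+1) + q' (k+1) * v₀)
        ≤ (L - Ssum q' b' k + q' k * v₀) * (Q + (q' (k+1) - q' k)) := by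
    intro k hk
    have hδ : 0 ≤ q' (k+1) - q' k := by linarith [hqstep' k hk]
    have hmul := mul_le_mul_of_nonneg_left (hcon k hk) hδ
    have hS1 := hSstep k
    rw [hS1]
    nlinarith [hmul]
  have hchain : ∀ k, k ≤ M → (L - Ssum q' b' k + q' k * v₀) * Q^k
      ≤ (L - Ssum q' b' 0 + q' 0 * v₀) * ∏ j ∈ Finset.range k, (Q + (q' (j+1) - q' j)) := by
    intro k
    induction k with
    | zero => intro _; simp
    | succ n ih =>
      intro hk
      have ih' := ih (by omega)
      have h1 := hstep n (by omega)
      have hδn : (0:ℝ) ≤ Q + (q' (n+1) - q' n) := by linarith [hqstep' n (by omega)]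
      calc (L - Ssum q' b' (n+1) + q' (n+1) * v₀) * Q^(n+1)
          = (Q * (L - Ssum q' b' (n+1) + q' (n+1) * v₀)) * Q^n := by ring
        _ ≤ ((L - Ssum q' b' n + q' n * v₀) * (Q + (q' (n+1) - q' n))) * Q^n :=
            mul_le_mul_of_nonneg_right h1 (le_of_lt (pow_pos hQ n))
        _ = ((L - Ssum q' b' n + q' n * v₀) * Q^n) * (Q + (q' (n+1) - q' n)) := by ring
        _ ≤ ((L - Ssum q' b' 0 + q' 0 * v₀)
              * ∏ j ∈ Finset.range n, (Q + (q' (j+1) - q' j))) * (Q + (q' (n+1) - q' n)) :=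
            mul_le_mul_of_nonneg_right ih' hδn
        _ = (L - Ssum q' b' 0 + q' 0 * v₀)
              * ∏ j ∈ Finset.range (n+1), (Q + (q' (j+1) - q' j)) := by
            rw [Finset.prod_range_succ]; ring
  have hS0 : Ssum q' b' 0 = 0 := by simp [Ssum]
  have hSnn : 0 ≤ Ssum q' b' M := by
    apply Finset.sum_nonneg
    intro j hj
    rw [Finset.mem_Icc] at hj
    have hq1 : q' (j-1) ≤ q' j := qmono hbid' (j-1) j (by omega) hj.2
    exact mul_nonneg (by linarith) (bnonneg hbid' j hj.1 hj.2)
  have hzero : bhat M q' b' (q' M) = 0 := bhat_eq_zero hbid' le_rfl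
  have hposv : pos (v₀ - bhat M q' b' (q' M)) = v₀ := by
    rw [hzero, sub_zero]; exact max_eq_left hv₀.le
  have hRM := hRk M le_rfl
  rw [hposv, hzero] at hRM
  have hL0 : 0 ≤ L := by nlinarith [hqleQ M le_rfl, hSnn, hRM]
  have hPM : Q * v₀ ≤ L - Ssum q' b' M + q' M * v₀ := by nlinarith [hRM]
  have hamgm : ∏ j ∈ Finset.range M, (Q + (q' (j+1) - q' j)) ≤ (((M:ℝ)+1) * Q / M)^M := by
    have h1 := amgm (n := M) (fun j => Q + (q' (j+1) - q' j)) (fun i hi => by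
      rw [Finset.mem_range] at hi
      show (0:ℝ) ≤ Q + (q' (i+1) - q' i)
      linarith [hqstep' i hi])
    have h2 : ∑ j ∈ Finset.range M, (Q + (q' (j+1) - q' j)) = M * Q + q' M := by
      rw [Finset.sum_add_distrib, Finset.sum_const, Finset.card_range, Finset.sum_range_sub q',
        hq0', nsmul_eq_mul]
      ring
    rw [h2] at h1
    refine le_trans h1 ?_
    have hbase : (0:ℝ) ≤ ((M:ℝ) * Q + q' M) / M :=
      div_nonneg (by nlinarith [hqnn M le_rfl]) hm0.le
    apply pow_le_pow_left₀ hbase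
    rw [div_le_div_iff₀ hm0 hm0]
    nlinarith [hqleQ M le_rfl]
  have hfinal : Q * v₀ * Q^M ≤ L * (((M:ℝ)+1) * Q / M)^M := by
    calc Q * v₀ * Q^M ≤ (L - Ssum q' b' M + q' M * v₀) * Q^M :=
          mul_le_mul_of_nonneg_right hPM (pow_nonneg hQ.le M)
      _ ≤ (L - Ssum q' b' 0 + q' 0 * v₀) * ∏ j ∈ Finset.range M, (Q + (q' (j+1) - q' j)) :=
          hchain M le_rfl
      _ = L * ∏ j ∈ Finset.range M, (Q + (q' (j+1) - q' j)) := by rw [hS0, hq0']; ring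
      _ ≤ L * (((M:ℝ)+1) * Q / M)^M := mul_le_mul_of_nonneg_left hamgm hL0
  have hrpow : (((M:ℝ)+1) * Q / M)^M * ((M:ℝ)/(M+1))^M = Q^M := by
    rw [← mul_pow]
    have h7 : ((M:ℝ)+1) * Q / M * ((M:ℝ)/(M+1)) = Q := by field_simp
    rw [h7]
  have h5 := mul_le_mul_of_nonneg_right hfinal (pow_nonneg hr0 M)
  rw [mul_assoc L, hrpow] at h5
  have hQM : (0:ℝ) < Q^M := pow_pos hQ M
  have h6 : Q * v₀ * ((M:ℝ)/(M+1))^M * Q^M ≤ L * Q^M := by nlinarith [h5]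
  exact le_of_mul_le_mul_right h6 hQM


/-- with constant marginal value `v > 0`, the `M`-point bid with evenly
spaced quantity points `q_k = kQ/M` and bids
`b_k = (v/(M+1)) Σ_{k'=k}^M (M/(M+1))^{k'−k}` is a minimax-loss bid in the constrained
pay-as-bid auction. -/
theorem constrained_pab_constant_values_closed_form
    (Q : ℝ) (hQ : 0 < Q) (M : ℕ) (hM : 1 ≤ M) (v₀ : ℝ) (hv₀ : 0 < v₀)
    (q b : ℕ → ℝ)
    (hq : ∀ k, q k = (k : ℝ) * Q / M)
    (hb : ∀ k, b k = (v₀ / (M + 1)) * ∑ j ∈ Finset.Icc k M, ((M : ℝ) / (M + 1)) ^ (j - k)) :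
    IsMinimaxCPAB Q M (fun _ => v₀) q b := by
  have hm0 : (0:ℝ) < M := by exact_mod_cast Nat.lt_of_lt_of_le Nat.zero_lt_one hM
  have hm1 : (0:ℝ) < (M:ℝ) + 1 := by linarith
  have hr0 : (0:ℝ) ≤ (M:ℝ)/(M+1) := by positivity
  have hr1 : (M:ℝ)/(M+1) ≤ 1 := by rw [div_le_one hm1]; linarith
  have hbc := b_closed hM hb
  have hqM : q M = Q := by rw [hq]; field_simp
  have hbid : IsBidPts Q M q b := by
    refine ⟨by simp [hq], ?_, le_of_eq hqM, ?_, ?_⟩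
    · intro k _
      rw [hq, hq]
      have hc1 : (k:ℝ) * Q ≤ ((k+1:ℕ):ℝ) * Q := by
        have : (k:ℝ) ≤ ((k+1:ℕ):ℝ) := by exact_mod_cast Nat.le_succ k
        nlinarith
      exact div_le_div_of_nonneg_right hc1 hm0.le |>.trans_eq rfl
    · intro k h1 h2
      rw [hbc k h1 (by omega), hbc (k+1) (by omega) (by omega)]
      have hple : ((M:ℝ)/(M+1))^(M+1-k) ≤ ((M:ℝ)/(M+1))^(M+1-(k+1)) :=
        pow_le_pow_of_le_one hr0 hr1 (by omega)
      nlinarith [hple]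
    · rw [hbc M hM (by omega)]
      have hle1 : ((M:ℝ)/(M+1))^(M+1-M) ≤ 1 := pow_le_one₀ hr0 hr1
      nlinarith [hle1]
  have hEk := Ek_ident hQ hM hq hbc
  have hble : ∀ k, 1 ≤ k → k ≤ M + 1 → b k ≤ v₀ := by
    intro k h1 h2
    rw [hbc k h1 h2]
    have hpn : (0:ℝ) ≤ ((M:ℝ)/(M+1))^(M+1-k) := by positivity
    nlinarith [hpn]
  have key1 : ∀ t ∈ Set.Icc (0:ℝ) Q,
      Rcpab Q M (fun _ => v₀) q b t ≤ Q * v₀ * ((M:ℝ)/(M+1))^M := by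
    rintro t ⟨ht0, htQ⟩
    rcases eq_or_lt_of_le htQ with rfl | hlt
    · -- t = Q
      have hz : bhat M q b t = 0 := bhat_eq_zero hbid (le_of_eq hqM)
      rw [Rcpab_formula, hz, integral_upto_top hbid (le_of_eq hqM)]
      have hEM := hEk M le_rfl
      have hbM1 : b (M+1) = 0 := by
        rw [hbc (M+1) (by omega) le_rfl]
        simp
      rw [hqM, hbM1] at hEM
      have hpos0 : (t - t) * pos (v₀ - 0) = 0 := by ring
      linarith [hEM, hpos0]
    · -- t < Q
      have htMQ0 : 0 ≤ t * M / Q := by positivity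
      set n := ⌊t * M / Q⌋₊ with hn
      have hn_le : (n:ℝ) ≤ t * M / Q := Nat.floor_le htMQ0
      have h_lt : t * M / Q < (n:ℝ) + 1 := Nat.lt_floor_add_one _
      have hnM : n < M := by
        have h9 : t * M / Q < M := by rw [div_lt_iff₀ hQ]; nlinarith
        have h10 : (n:ℝ) < M := lt_of_le_of_lt hn_le h9
        exact_mod_cast h10
      have hk1 : 1 ≤ n + 1 := by omega
      have hkM : n + 1 ≤ M := by omega
      have hqk1 : q (n + 1 - 1) ≤ t := by
        rw [(by omega : n + 1 - 1 = n), hq, div_le_iff₀ hm0]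
        have h11 : (n:ℝ) * Q ≤ t * M := by
          have := (le_div_iff₀ hQ).mp hn_le
          linarith
        linarith
      have hqk2 : t < q (n + 1) := by
        rw [hq, lt_div_iff₀ hm0]
        have h12 := (div_lt_iff₀ hQ).mp h_lt
        push_cast
        nlinarith
      have hbt : bhat M q b t = b (n+1) := bhat_eq hbid hk1 hkM hqk1 hqk2
      have hint := integral_upto_mid hbid hk1 hkM hqk1 (le_of_lt hqk2)
      rw [Rcpab_formula, hbt, hint]
      have hposv : pos (v₀ - b (n+1)) = v₀ - b (n+1) :=
        max_eq_left (by linarith [hble (n+1) hk1 (by omega)])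
      rw [hposv]
      have hEk' := hEk (n + 1 - 1) (by omega)
      rw [(by omega : n + 1 - 1 + 1 = n + 1)] at hEk'
      have hprodn : 0 ≤ (t - q (n + 1 - 1)) * (v₀ - b (n+1)) :=
        mul_nonneg (by linarith) (by linarith [hble (n+1) hk1 (by omega)])
      nlinarith [hEk', hprodn]
  refine ⟨hbid, ?_⟩
  intro q' b' hbid'
  have hLb : Lcpab Q M (fun _ => v₀) q b ≤ Q * v₀ * ((M:ℝ)/(M+1))^M := by
    apply csSup_le
    · exact ⟨Rcpab Q M (fun _ => v₀) q b 0, 0, ⟨le_rfl, hQ.le⟩, rfl⟩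
    · rintro r ⟨t, ht, rfl⟩
      exact key1 t ht
  exact le_trans hLb (lower_bound hQ hM hv₀ q' b' hbid')

end
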